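/- Let X be a metric space that is not an R-space, witnessed by C > 0 and sequences (x_n), (y_n) with |d_X(x_n,x_m) − d_X(y_n,y_m)| < C for all n, m and d_X(x_n,y_n) → ∞. Suppose moreover d_X(x_k, y_n) > k for all k, n. Define d₁(x,y') = min_n [d_X(x,x_n) + C + d_X(y_n,y)]. Then d₁, together with d_X on the two copies, is a metric on the double X ⊔ X'. -/
import Mathlib


/-- A function `d : α → α → ℝ` is a metric. -/
def IsMetric {α : Type*} (d : α → α → ℝ) : Prop :=
  (∀ p q, d p q = 0 ↔ p = q) ∧ (∀ p q, d p q = d q p) ∧ ∀ p q r, d p r ≤ d p q + d q r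

/-- The distance on the double `X ⊔ X'` built from sequences `(x_n)`, `(y_n)` and
`C > 0`: `d_X` within each copy and `d₁(a, c') = inf_n [d_X(a, x_n) + C + d_X(y_n, c)]`
between the copies. -/
noncomputable def D1 {X : Type*} [MetricSpace X] (x y : ℕ → X) (C : ℝ) :
    X ⊕ X → X ⊕ X → ℝ
  | Sum.inl p, Sum.inl q => dist p q
  | Sum.inr p, Sum.inr q => dist p q
  | Sum.inl p, Sum.inr q => ⨅ n : ℕ, dist p (x n) + C + dist (y n) q
  | Sum.inr q, Sum.inl p => ⨅ n : ℕ, dist p (x n) + C + dist (y n) q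

/-- if `(x_n)`, `(y_n)` witness that `X` is not an R-space, i.e.
`|d_X(x_n, x_m) - d_X(y_n, y_m)| < C` for all `n, m` and `d_X(x_n, y_n) → ∞`, and
moreover `d_X(x_k, y_n) > k` for all `k, n`, then `d₁`, together with `d_X` on the
two copies, is a metric on the double `X ⊔ X'`. -/
theorem stmt19 {X : Type*} [MetricSpace X] (C : ℝ) (hC : 0 < C) (x y : ℕ → X)
    (h1 : ∀ n m, |dist (x n) (x m) - dist (y n) (y m)| < C)
    (h2 : Filter.Tendsto (fun n => dist (x n) (y n)) Filter.atTop Filter.atTop)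
    (h3 : ∀ k n : ℕ, (k : ℝ) < dist (x k) (y n)) :
    IsMetric (D1 x y C) := by
  have hbdd : ∀ (p q : X), BddBelow (Set.range fun n => dist p (x n) + C + dist (y n) q) := by
    intro p q
    refine ⟨C, ?_⟩
    rintro _ ⟨n, rfl⟩
    have h1' := dist_nonneg (x := p) (y := x n)
    have h2' := dist_nonneg (x := y n) (y := q)
    simp only
    linarith
  have hCle : ∀ p q : X, C ≤ ⨅ n : ℕ, dist p (x n) + C + dist (y n) q := by
    intro p q
    apply le_ciInf
    intro n
    have h1' := dist_nonneg (x := p) (y := x n)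
    have h2' := dist_nonneg (x := y n) (y := q)
    linarith
  refine ⟨?_, ?_, ?_⟩
  · rintro (p | p) (q | q)
    · simp [D1]
    · refine iff_of_false ?_ (by simp)
      show ¬ (⨅ n : ℕ, dist p (x n) + C + dist (y n) q) = 0
      intro h
      have := hCle p q
      rw [h] at this
      linarith
    · refine iff_of_false ?_ (by simp)
      show ¬ (⨅ n : ℕ, dist q (x n) + C + dist (y n) p) = 0
      intro h
      have := hCle q p
      rw [h] at this
      linarith
    · simp [D1]
  · rintro (p | p) (q | q)
    · simp [D1, dist_comm]
    · rfl
    · rfl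
    · simp [D1, dist_comm]
  · rintro (p | p) (q | q) (r | r)
    · exact dist_triangle p q r
    · -- inl p, inl q, inr r
      show (⨅ n : ℕ, dist p (x n) + C + dist (y n) r) ≤
        dist p q + ⨅ n : ℕ, dist q (x n) + C + dist (y n) r
      rw [← sub_le_iff_le_add']
      apply le_ciInf
      intro n
      rw [sub_le_iff_le_add']
      refine (ciInf_le (hbdd p r) n).trans ?_
      have := dist_triangle p q (x n)
      linarith
    · -- inl p, inr q, inl r : dist p r ≤ inf + inf
      show dist p r ≤ (⨅ n : ℕ, dist p (x n) + C + dist (y n) q) +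
        ⨅ n : ℕ, dist r (x n) + C + dist (y n) q
      rw [← sub_le_iff_le_add]
      apply le_ciInf
      intro m
      rw [sub_le_iff_le_add, ← sub_le_iff_le_add']
      apply le_ciInf
      intro n
      rw [sub_le_iff_le_add']
      have t1 := dist_triangle p (x m) r
      have t2 := dist_triangle (x m) (x n) r
      have t3 := abs_lt.mp (h1 m n)
      have t4 := dist_triangle (y m) q (y n)
      have t5 : dist q (y n) = dist (y n) q := dist_comm q (y n)
      have t6 : dist (x n) r = dist r (x n) := dist_comm (x n) r
      linarith [t3.2]
    · -- inl p, inr q, inr r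
      show (⨅ n : ℕ, dist p (x n) + C + dist (y n) r) ≤
        (⨅ n : ℕ, dist p (x n) + C + dist (y n) q) + dist q r
      rw [← sub_le_iff_le_add]
      apply le_ciInf
      intro n
      rw [sub_le_iff_le_add]
      refine (ciInf_le (hbdd p r) n).trans ?_
      have := dist_triangle (y n) q r
      linarith
    · -- inr p, inl q, inl r
      show (⨅ n : ℕ, dist r (x n) + C + dist (y n) p) ≤
        (⨅ n : ℕ, dist q (x n) + C + dist (y n) p) + dist q r
      rw [← sub_le_iff_le_add]
      apply le_ciInf
      intro n
      rw [sub_le_iff_le_add]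
      refine (ciInf_le (hbdd r p) n).trans ?_
      have := dist_triangle r q (x n)
      have := dist_comm r q
      linarith
    · -- inr p, inl q, inr r : dist p r ≤ inf + inf
      show dist p r ≤ (⨅ n : ℕ, dist q (x n) + C + dist (y n) p) +
        ⨅ n : ℕ, dist q (x n) + C + dist (y n) r
      rw [← sub_le_iff_le_add]
      apply le_ciInf
      intro m
      rw [sub_le_iff_le_add, ← sub_le_iff_le_add']
      apply le_ciInf
      intro n
      rw [sub_le_iff_le_add']
      have t1 := dist_triangle p (y m) r
      have t2 := dist_triangle (y m) (y n) r
      have t3 := abs_lt.mp (h1 m n)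
      have t4 := dist_triangle (x m) q (x n)
      have t5 : dist (x m) q = dist q (x m) := dist_comm (x m) q
      have t6 : dist p (y m) = dist (y m) p := dist_comm p (y m)
      linarith [t3.1]
    · -- inr p, inr q, inl r
      show (⨅ n : ℕ, dist r (x n) + C + dist (y n) p) ≤
        dist p q + ⨅ n : ℕ, dist r (x n) + C + dist (y n) q
      rw [← sub_le_iff_le_add']
      apply le_ciInf
      intro n
      rw [sub_le_iff_le_add']
      refine (ciInf_le (hbdd r p) n).trans ?_
      have := dist_triangle (y n) q p
      have := dist_comm q p
      linarith
    · exact dist_triangle p q r
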